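/- Let ε > 0, μ > 0, δ(x₁) = ε + x₁², k(x) = x₂/δ(x₁), v₁¹(x) = (k(x)+1/2, x₁(k(x)²−1/4)) and p̄₁¹(x) = 2μ x₁ k(x)/δ(x₁). Then there exists a constant C depending only on μ such that |μ Δ v₁¹(x) − ∇ p̄₁¹(x)| ≤ C/δ(x₁) for all x in the neck region {|x₂| < δ(x₁)/2, |x₁| ≤ 1}. -/

import Mathlib

set_option maxHeartbeats 1600000 in
/-- Residual estimate `|μ Δ v₁¹ - ∇ p̄₁¹| ≤ C/δ` (componentwise), `C = C(μ)`. -/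
theorem stmt10 (μ : ℝ) (hμ : 0 < μ) :
    ∃ C > (0:ℝ), ∀ ε : ℝ, 0 < ε → ∀ x₁ x₂ : ℝ,
      |x₂| < (ε + x₁ ^ 2) / 2 → |x₁| ≤ 1 →
      |μ * (deriv (deriv (fun t => x₂ / (ε + t ^ 2) + 1 / 2)) x₁
            + deriv (deriv (fun t => t / (ε + x₁ ^ 2) + 1 / 2)) x₂)
         - deriv (fun t => 2 * μ * t * (x₂ / (ε + t ^ 2)) / (ε + t ^ 2)) x₁|
        ≤ C / (ε + x₁ ^ 2) ∧
      |μ * (deriv (deriv (fun t => t * ((x₂ / (ε + t ^ 2)) ^ 2 - 1 / 4))) x₁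
            + deriv (deriv (fun t => x₁ * ((t / (ε + x₁ ^ 2)) ^ 2 - 1 / 4))) x₂)
         - deriv (fun t => 2 * μ * x₁ * (t / (ε + x₁ ^ 2)) / (ε + x₁ ^ 2)) x₂|
        ≤ C / (ε + x₁ ^ 2) := by
  refine ⟨10 * μ, by positivity, ?_⟩
  intro ε hε x₁ x₂ hx2 hx1
  set δ := ε + x₁ ^ 2 with hδdef
  have hδ : 0 < δ := by positivity
  have hδne : δ ≠ 0 := ne_of_gt hδ
  have hne : ∀ t : ℝ, ε + t ^ 2 ≠ 0 := fun t => by positivity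
  have hbase : ∀ t : ℝ, HasDerivAt (fun s : ℝ => ε + s ^ 2) (2 * t) t := by
    intro t
    simpa using (hasDerivAt_pow 2 t).const_add ε
  have hq : ∀ t : ℝ, HasDerivAt (fun s : ℝ => x₂ / (ε + s ^ 2))
      ((0 * (ε + t ^ 2) - x₂ * (2 * t)) / (ε + t ^ 2) ^ 2) t :=
    fun t => (hasDerivAt_const t x₂).div (hbase t) (hne t)
  -- First component
  have hF1' : deriv (fun t => x₂ / (ε + t ^ 2) + 1 / 2)
      = fun t => -(2 * t * x₂) / (ε + t ^ 2) ^ 2 := by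
    funext t
    rw [((hq t).add_const (1 / 2)).deriv]
    ring
  have hF1'' : deriv (deriv (fun t => x₂ / (ε + t ^ 2) + 1 / 2)) x₁
      = (-(2 * x₂) * (ε + x₁ ^ 2) ^ 2 - -(2 * x₁ * x₂) * (2 * (ε + x₁ ^ 2) ^ 1 * (2 * x₁)))
        / ((ε + x₁ ^ 2) ^ 2) ^ 2 := by
    rw [hF1']
    have hnum : HasDerivAt (fun t : ℝ => -(2 * t * x₂)) (-(2 * x₂)) x₁ := by
      simpa using (show HasDerivAt (fun t : ℝ => -(2 * t * x₂)) _ x₁ from (((hasDerivAt_id x₁).const_mul 2).mul_const x₂).neg)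
    have hden : HasDerivAt (fun t : ℝ => (ε + t ^ 2) ^ 2)
        (2 * (ε + x₁ ^ 2) ^ 1 * (2 * x₁)) x₁ := by
      simpa using (show HasDerivAt (fun t : ℝ => (ε + t ^ 2) ^ 2) _ x₁ from (hbase x₁).pow 2)
    have := (show HasDerivAt (fun t : ℝ => -(2 * t * x₂) / (ε + t ^ 2) ^ 2) _ x₁ from hnum.div hden (pow_ne_zero 2 (hne x₁)))
    simpa using this.deriv
  have hG1' : deriv (fun t : ℝ => t / δ + 1 / 2) = fun _ => 1 / δ := by
    funext t
    have h1 : HasDerivAt (fun s : ℝ => s / δ + 1 / 2) (1 / δ) t := by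
      simpa [one_div] using ((hasDerivAt_id t).div_const δ).add_const (1 / 2)
    exact h1.deriv
  have hG1'' : deriv (deriv (fun t : ℝ => t / δ + 1 / 2)) x₂ = 0 := by
    rw [hG1']; simp
  have hP1 : deriv (fun t => 2 * μ * t * (x₂ / (ε + t ^ 2)) / (ε + t ^ 2)) x₁
      = ((2 * μ * (x₂ / (ε + x₁ ^ 2)) + 2 * μ * x₁ *
          ((0 * (ε + x₁ ^ 2) - x₂ * (2 * x₁)) / (ε + x₁ ^ 2) ^ 2)) * (ε + x₁ ^ 2)
          - 2 * μ * x₁ * (x₂ / (ε + x₁ ^ 2)) * (2 * x₁)) / (ε + x₁ ^ 2) ^ 2 := by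
    have h1 : HasDerivAt (fun t : ℝ => 2 * μ * t) (2 * μ) x₁ := by
      simpa using (hasDerivAt_id x₁).const_mul (2 * μ)
    have h2 := h1.mul (hq x₁)
    have h3 := (show HasDerivAt (fun t : ℝ => 2 * μ * t * (x₂ / (ε + t ^ 2)) / (ε + t ^ 2)) _ x₁ from h2.div (hbase x₁) (hne x₁))
    simpa using h3.deriv
  have key1 : μ * (deriv (deriv (fun t => x₂ / (ε + t ^ 2) + 1 / 2)) x₁
            + deriv (deriv (fun t => t / (ε + x₁ ^ 2) + 1 / 2)) x₂)
         - deriv (fun t => 2 * μ * t * (x₂ / (ε + t ^ 2)) / (ε + t ^ 2)) x₁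
      = μ * x₂ * (16 * x₁ ^ 2 - 4 * δ) / δ ^ 3 := by
    rw [hF1'', hP1]
    rw [show (fun t : ℝ => t / (ε + x₁ ^ 2) + 1 / 2) = fun t : ℝ => t / δ + 1 / 2 from rfl]
    rw [hG1'']
    rw [hδdef]
    field_simp
    ring
  -- Second component
  have hF2' : deriv (fun t => t * ((x₂ / (ε + t ^ 2)) ^ 2 - 1 / 4))
      = fun t => (x₂ ^ 2 * (ε + t ^ 2) - 4 * t ^ 2 * x₂ ^ 2) / (ε + t ^ 2) ^ 3 - 1 / 4 := by
    funext t
    have h1 : HasDerivAt (fun s : ℝ => (x₂ / (ε + s ^ 2)) ^ 2 - 1 / 4)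
        (2 * (x₂ / (ε + t ^ 2)) ^ 1 * ((0 * (ε + t ^ 2) - x₂ * (2 * t)) / (ε + t ^ 2) ^ 2)) t :=
      ((hq t).pow 2).sub_const (1 / 4)
    have h2 := (show HasDerivAt (fun s : ℝ => s * ((x₂ / (ε + s ^ 2)) ^ 2 - 1 / 4)) _ t from (hasDerivAt_id' t).mul h1)
    rw [h2.deriv]
    field_simp
    ring
  have hF2'' : deriv (deriv (fun t => t * ((x₂ / (ε + t ^ 2)) ^ 2 - 1 / 4))) x₁
      = ((x₂ ^ 2 * (2 * x₁) - 4 * (2 * x₁) * x₂ ^ 2) * (ε + x₁ ^ 2) ^ 3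
          - (x₂ ^ 2 * (ε + x₁ ^ 2) - 4 * x₁ ^ 2 * x₂ ^ 2) * (3 * (ε + x₁ ^ 2) ^ 2 * (2 * x₁)))
        / ((ε + x₁ ^ 2) ^ 3) ^ 2 := by
    rw [hF2']
    have hnum : HasDerivAt (fun t : ℝ => x₂ ^ 2 * (ε + t ^ 2) - 4 * t ^ 2 * x₂ ^ 2)
        (x₂ ^ 2 * (2 * x₁) - 4 * (2 * x₁) * x₂ ^ 2) x₁ := by
      have ha : HasDerivAt (fun t : ℝ => x₂ ^ 2 * (ε + t ^ 2)) (x₂ ^ 2 * (2 * x₁)) x₁ :=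
        (hbase x₁).const_mul (x₂ ^ 2)
      have hb : HasDerivAt (fun t : ℝ => 4 * t ^ 2 * x₂ ^ 2) (4 * (2 * x₁) * x₂ ^ 2) x₁ := by
        simpa using (((hasDerivAt_pow 2 x₁).const_mul 4).mul_const (x₂ ^ 2))
      exact ha.sub hb
    have hden : HasDerivAt (fun t : ℝ => (ε + t ^ 2) ^ 3)
        (3 * (ε + x₁ ^ 2) ^ 2 * (2 * x₁)) x₁ := by
      simpa using (show HasDerivAt (fun t : ℝ => (ε + t ^ 2) ^ 3) _ x₁ from (hbase x₁).pow 3)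
    have := (hnum.div hden (pow_ne_zero 3 (hne x₁))).sub_const (1 / 4)
    simpa using this.deriv
  have hG2' : deriv (fun t : ℝ => x₁ * ((t / δ) ^ 2 - 1 / 4))
      = fun t => (2 * x₁ / δ ^ 2) * t := by
    funext t
    have h1 : HasDerivAt (fun s : ℝ => x₁ * ((s / δ) ^ 2 - 1 / 4))
        (x₁ * (2 * (t / δ) ^ 1 * (1 / δ))) t := by
      have h0 : HasDerivAt (fun s : ℝ => s / δ) (1 / δ) t := by
        simpa [one_div] using (hasDerivAt_id t).div_const δ
      exact ((h0.pow 2).sub_const (1 / 4)).const_mul x₁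
    rw [h1.deriv]
    field_simp
  have hG2'' : deriv (deriv (fun t : ℝ => x₁ * ((t / δ) ^ 2 - 1 / 4))) x₂
      = 2 * x₁ / δ ^ 2 := by
    rw [hG2']
    simpa using ((hasDerivAt_id x₂).const_mul (2 * x₁ / δ ^ 2)).deriv
  have hP2 : deriv (fun t : ℝ => 2 * μ * x₁ * (t / δ) / δ) x₂
      = 2 * μ * x₁ * (1 / δ) / δ := by
    have h0 : HasDerivAt (fun s : ℝ => s / δ) (1 / δ) x₂ := by
      simpa [one_div] using (hasDerivAt_id x₂).div_const δ
    exact ((h0.const_mul (2 * μ * x₁)).div_const δ).deriv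
  have key2 : μ * (deriv (deriv (fun t => t * ((x₂ / (ε + t ^ 2)) ^ 2 - 1 / 4))) x₁
            + deriv (deriv (fun t => x₁ * ((t / (ε + x₁ ^ 2)) ^ 2 - 1 / 4))) x₂)
         - deriv (fun t => 2 * μ * x₁ * (t / (ε + x₁ ^ 2)) / (ε + x₁ ^ 2)) x₂
      = μ * x₂ ^ 2 * (24 * x₁ ^ 3 - 12 * x₁ * δ) / δ ^ 4 := by
    rw [hF2'']
    rw [show (fun t : ℝ => x₁ * ((t / (ε + x₁ ^ 2)) ^ 2 - 1 / 4))
        = fun t : ℝ => x₁ * ((t / δ) ^ 2 - 1 / 4) from rfl]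
    rw [show (fun t : ℝ => 2 * μ * x₁ * (t / (ε + x₁ ^ 2)) / (ε + x₁ ^ 2))
        = fun t : ℝ => 2 * μ * x₁ * (t / δ) / δ from rfl]
    rw [hG2'', hP2, hδdef]
    field_simp
    ring
  -- Bounds
  have hx2' : |x₂| ≤ δ / 2 := le_of_lt hx2
  have hx1sq : x₁ ^ 2 ≤ δ := by rw [hδdef]; linarith
  have hx1' := abs_le.mp hx1
  have hx2sq : x₂ ^ 2 ≤ δ ^ 2 / 4 := by
    nlinarith [abs_nonneg x₂, sq_abs x₂]
  constructor
  · rw [key1]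
    have e1 : |μ * x₂ * (16 * x₁ ^ 2 - 4 * δ) / δ ^ 3|
        = μ * |x₂| * |16 * x₁ ^ 2 - 4 * δ| / δ ^ 3 := by
      rw [abs_div, abs_mul, abs_mul, abs_of_pos hμ, abs_of_pos (by positivity : (0:ℝ) < δ ^ 3)]
    rw [e1]
    have h2 : |16 * x₁ ^ 2 - 4 * δ| ≤ 20 * δ := by
      rw [abs_le]; constructor <;> nlinarith
    calc μ * |x₂| * |16 * x₁ ^ 2 - 4 * δ| / δ ^ 3
        ≤ μ * (δ / 2) * (20 * δ) / δ ^ 3 := by gcongr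
      _ = 10 * μ / δ := by field_simp; ring
  · rw [key2]
    have e2 : |μ * x₂ ^ 2 * (24 * x₁ ^ 3 - 12 * x₁ * δ) / δ ^ 4|
        = μ * x₂ ^ 2 * |24 * x₁ ^ 3 - 12 * x₁ * δ| / δ ^ 4 := by
      rw [abs_div, abs_mul, abs_mul, abs_of_pos hμ, abs_of_nonneg (sq_nonneg x₂),
        abs_of_pos (by positivity : (0:ℝ) < δ ^ 4)]
    rw [e2]
    have h3 : |24 * x₁ ^ 3 - 12 * x₁ * δ| ≤ 36 * δ := by
      rw [abs_le]
      constructor <;> nlinarith [sq_nonneg x₁, sq_nonneg (x₁ - 1), sq_nonneg (x₁ + 1),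
        hx1'.1, hx1'.2, hx1sq, hδ]
    calc μ * x₂ ^ 2 * |24 * x₁ ^ 3 - 12 * x₁ * δ| / δ ^ 4
        ≤ μ * (δ ^ 2 / 4) * (36 * δ) / δ ^ 4 := by gcongr
      _ = 9 * μ / δ := by field_simp; ring
      _ ≤ 10 * μ / δ := by gcongr; linarith
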